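/- Let e > 0 and let x₀ > 0 be the unique positive number with x₀²(1 + x₀²) = e². Then the maximal solution x of the initial value problem x'' = −x − 2x³, x(0) = 0, x'(0) = e is defined on all of ℝ, satisfies |x(τ)| ≤ x₀ for all τ with sup_τ |x(τ)| = x₀, and is periodic with period T = 4·∫₀^{x₀} (e² − s² − s⁴)^{−1/2} ds; in particular x(T/4) = x₀ and x'(T/4) = 0. (Equivalently: the radial profile ρ with sinh ρ = x of the pulsating string oscillates between ±ρ₀, where sinh ρ₀ cosh ρ₀ = e.) -/

import Mathlib

noncomputable section

open Real Set Filter Topology MeasureTheory intervalIntegral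

set_option maxHeartbeats 1000000

namespace DuffingAux

def Q (e s : ℝ) : ℝ := e ^ 2 - s ^ 2 - s ^ 4
def gg (a s : ℝ) : ℝ := (a + s) * (1 + a ^ 2 + s ^ 2)
def H (e s : ℝ) : ℝ := (Real.sqrt (Q e s))⁻¹
def F (e u : ℝ) : ℝ := ∫ s in (0:ℝ)..u, H e s

variable {e a u v : ℝ}

lemma rpow_neg_half {t : ℝ} (ht : 0 ≤ t) : t ^ (-(1/2) : ℝ) = (Real.sqrt t)⁻¹ := by
  rw [Real.rpow_neg ht, Real.sqrt_eq_rpow]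

lemma Hnonneg (s : ℝ) : 0 ≤ H e s := by simp only [H]; positivity

lemma Heven (s : ℝ) : H e (-s) = H e s := by
  simp only [H, Q]; ring_nf

lemma Qcont : Continuous (Q e) := by unfold Q; continuity

lemma Hmeas : Measurable (H e) := ((Real.continuous_sqrt.comp Qcont).measurable).inv

lemma sqrt_integral (ha : u ≤ a) :
    ∫ s in u..a, (a - s) ^ (-(1/2) : ℝ) = 2 * Real.sqrt (a - u) := by
  rw [intervalIntegral.integral_comp_sub_left (fun t => t ^ (-(1/2):ℝ)) a, sub_self]
  rw [integral_rpow (Or.inl (by norm_num : (-1:ℝ) < -(1/2)))]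
  rw [Real.zero_rpow (by norm_num : (-(1/2) : ℝ) + 1 ≠ 0), Real.sqrt_eq_rpow]
  norm_num
  ring

lemma intD (c u : ℝ) :
    IntervalIntegrable (fun s => c * (a - s) ^ (-(1/2) : ℝ)) volume u a := by
  have h := (intervalIntegral.intervalIntegrable_rpow'
    (by norm_num : (-1:ℝ) < -(1/2)) (a := 0) (b := a - u)).comp_sub_left a
  simp only [sub_zero, sub_sub_cancel] at h
  exact (h.const_mul c).symm

section params
variable (hQ : a ^ 2 * (1 + a ^ 2) = e ^ 2) (ha : 0 < a)

-- from part A (proved already)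
lemma Qfact (hQ : a ^ 2 * (1 + a ^ 2) = e ^ 2) (s : ℝ) :
    Q e s = (a - s) * gg a s := by
  simp only [Q, gg]; linear_combination -hQ

lemma gg_pos (ha : 0 < a) {s : ℝ} (hs : -a < s) : 0 < gg a s := by
  have : 0 < a + s := by linarith
  have : (0:ℝ) < 1 + a ^ 2 + s ^ 2 := by positivity
  simp only [gg]; positivity

lemma gg_le (ha : 0 < a) {s : ℝ} (hs1 : -a ≤ s) (hs2 : s ≤ a) : gg a s ≤ gg a a := by
  simp only [gg]
  nlinarith [mul_nonneg (sub_nonneg.2 hs2) (sq_nonneg (a + s)), sq_nonneg (a + s), sq_nonneg a]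

lemma gg_mono {u s : ℝ} (ha : 0 ≤ a) (h0 : 0 ≤ u) (hus : u ≤ s) : gg a u ≤ gg a s := by
  have key : gg a s - gg a u = (s - u) * ((1 + a ^ 2) + a * (s + u) + (s ^ 2 + s * u + u ^ 2)) := by
    simp only [gg]; ring
  have h1 : (0:ℝ) ≤ (1 + a ^ 2) + a * (s + u) + (s ^ 2 + s * u + u ^ 2) := by
    have := mul_nonneg ha (by linarith : (0:ℝ) ≤ s + u)
    have := mul_nonneg h0 (h0.trans hus)
    nlinarith [sq_nonneg s, sq_nonneg u, sq_nonneg a]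
  nlinarith [mul_nonneg (sub_nonneg.2 hus) h1]

include hQ ha

lemma Qpos {s : ℝ} (h1 : -a < s) (h2 : s < a) : 0 < Q e s := by
  rw [Qfact hQ]
  exact mul_pos (by linarith) (gg_pos ha h1)

lemma Qzero_a : Q e a = 0 := by rw [Qfact hQ]; ring

lemma Ha_zero : H e a = 0 := by
  rw [H, Qzero_a hQ ha, Real.sqrt_zero, inv_zero]

lemma intH01 : IntervalIntegrable (H e) volume 0 a := by
  refine (intD ((Real.sqrt a)⁻¹) 0).mono_fun
    (Hmeas.aestronglyMeasurable) ?_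
  filter_upwards [ae_restrict_mem measurableSet_uIoc] with s hs
  rw [uIoc_of_le ha.le] at hs
  obtain ⟨hs0, hsa⟩ := hs
  rw [Real.norm_eq_abs, Real.norm_eq_abs, abs_of_nonneg (Hnonneg s),
    abs_of_nonneg (mul_nonneg (by positivity) (Real.rpow_nonneg (by linarith) _))]
  rcases eq_or_lt_of_le hsa with h | h
  · rw [h, Ha_zero hQ ha, sub_self, Real.zero_rpow (by norm_num : (-(1/2):ℝ) ≠ 0), mul_zero]
  · have hkey : a * (a - s) ≤ Q e s := by
      rw [Qfact hQ]
      have : a ≤ gg a s := by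
        simp only [gg]; nlinarith [sq_nonneg s, sq_nonneg a]
      nlinarith
    have hpos : 0 < a * (a - s) := by nlinarith
    rw [rpow_neg_half (by linarith : (0:ℝ) ≤ a - s), ← mul_inv, ← Real.sqrt_mul ha.le]
    have h1 : Real.sqrt (a * (a - s)) ≤ Real.sqrt (Q e s) := Real.sqrt_le_sqrt hkey
    have h2 : 0 < Real.sqrt (a * (a - s)) := Real.sqrt_pos.2 hpos
    show (Real.sqrt (Q e s))⁻¹ ≤ _
    exact inv_anti₀ h2 h1

lemma intHfull : IntervalIntegrable (H e) volume (-a) a := by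
  have h2 : IntervalIntegrable (fun s => H e (-s)) volume (-0) (-a) :=
    (IntervalIntegrable.iff_comp_neg).mp (intH01 hQ ha)
  simp only [neg_zero] at h2
  have h2' : IntervalIntegrable (H e) volume 0 (-a) := by
    simpa only [Heven] using h2
  exact h2'.symm.trans (intH01 hQ ha)

lemma intH {u v : ℝ} (hu : u ∈ Icc (-a) a) (hv : v ∈ Icc (-a) a) :
    IntervalIntegrable (H e) volume u v := by
  have hsub : uIcc u v ⊆ uIcc (-a) a :=
    uIcc_subset_uIcc (by rw [uIcc_of_le (by linarith : -a ≤ a)]; exact hu)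
      (by rw [uIcc_of_le (by linarith : -a ≤ a)]; exact hv)
  exact (intHfull hQ ha).mono_set hsub

lemma Fcont : ContinuousOn (F e) (Icc (-a) a) := by
  have := intervalIntegral.continuousOn_primitive_interval' (a := 0) (intHfull hQ ha)
    (by rw [uIcc_of_le (by linarith : -a ≤ a)]; exact ⟨by linarith, by linarith⟩)
  rwa [uIcc_of_le (by linarith : -a ≤ a)] at this

lemma FhasDeriv {u : ℝ} (hu : u ∈ Ioo (-a) a) : HasDerivAt (F e) (H e u) u := by
  apply intervalIntegral.integral_hasDerivAt_right
    (intH hQ ha ⟨by linarith, by linarith⟩ ⟨hu.1.le, hu.2.le⟩)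
    (Hmeas.stronglyMeasurable.stronglyMeasurableAtFilter)
  have hq : Q e u ≠ 0 := (Qpos hQ ha hu.1 hu.2).ne'
  exact ((Real.continuous_sqrt.comp Qcont).continuousAt).inv₀
    (by simpa [Real.sqrt_ne_zero'] using (Qpos hQ ha hu.1 hu.2))

lemma Fmono : StrictMonoOn (F e) (Icc (-a) a) := by
  apply strictMonoOn_of_deriv_pos (convex_Icc _ _) (Fcont hQ ha)
  intro u hu
  rw [interior_Icc] at hu
  rw [(FhasDeriv hQ ha hu).deriv]
  have := Qpos hQ ha hu.1 hu.2
  rw [H]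
  positivity

omit hQ ha in
lemma Fodd (u : ℝ) : F e (-u) = - F e u := by
  have h := intervalIntegral.integral_comp_neg (fun s => H e s) (a := u) (b := 0)
  simp only [neg_zero] at h
  calc F e (-u) = ∫ s in u..(0:ℝ), H e (-s) := h.symm
    _ = ∫ s in u..(0:ℝ), H e s := by simp only [Heven]
    _ = - ∫ s in (0:ℝ)..u, H e s := by rw [← intervalIntegral.integral_symm]
    _ = - F e u := rfl

omit hQ ha in
lemma F0 : F e 0 = 0 := intervalIntegral.integral_same

lemma Fa_pos : 0 < F e a := by
  have := (Fmono hQ ha) (⟨by linarith, by linarith⟩ : (0:ℝ) ∈ Icc (-a) a)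
    ⟨by linarith, le_refl a⟩ ha
  rwa [F0] at this

/-- the inverse function of `F e` on `[-a, a]` -/
def G (e a : ℝ) : ℝ → ℝ := Function.invFunOn (F e) (Icc (-a) a)

lemma G_left {u : ℝ} (hu : u ∈ Icc (-a) a) : G e a (F e u) = u :=
  (Fmono hQ ha).injOn.leftInvOn_invFunOn hu

lemma Fsurj {t : ℝ} (ht : t ∈ Icc (-(F e a)) (F e a)) :
    ∃ u ∈ Icc (-a) a, F e u = t := by
  have hsub := intermediate_value_Icc (by linarith : -a ≤ a) (Fcont hQ ha)
  rw [Fodd] at hsub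
  exact hsub ht

lemma G_mem {t : ℝ} (ht : t ∈ Icc (-(F e a)) (F e a)) : G e a t ∈ Icc (-a) a :=
  Function.invFunOn_mem (Fsurj hQ ha ht)

lemma G_right {t : ℝ} (ht : t ∈ Icc (-(F e a)) (F e a)) : F e (G e a t) = t :=
  Function.invFunOn_eq (Fsurj hQ ha ht)

lemma Ga : G e a (F e a) = a := G_left hQ ha ⟨by linarith, le_refl a⟩

lemma G0 : G e a 0 = 0 := by
  have := G_left hQ ha (⟨by linarith, by linarith⟩ : (0:ℝ) ∈ Icc (-a) a)
  rwa [F0] at this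

lemma Godd {t : ℝ} (ht : t ∈ Icc (-(F e a)) (F e a)) : G e a (-t) = - G e a t := by
  have hnt : -t ∈ Icc (-(F e a)) (F e a) := ⟨by linarith [ht.2], by linarith [ht.1]⟩
  have h1 : G e a (-t) ∈ Icc (-a) a := G_mem hQ ha hnt
  have h2 : -(G e a t) ∈ Icc (-a) a := by
    have := G_mem hQ ha ht; exact ⟨by linarith [this.2], by linarith [this.1]⟩
  apply (Fmono hQ ha).injOn h1 h2
  rw [G_right hQ ha hnt]
  have : F e (-(G e a t)) = - F e (G e a t) := Fodd _
  rw [this, G_right hQ ha ht]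

lemma Glt {t₁ t₂ : ℝ} (h1 : t₁ ∈ Icc (-(F e a)) (F e a))
    (h2 : t₂ ∈ Icc (-(F e a)) (F e a)) : G e a t₁ < G e a t₂ ↔ t₁ < t₂ := by
  rw [← (Fmono hQ ha).lt_iff_lt (G_mem hQ ha h1) (G_mem hQ ha h2),
    G_right hQ ha h1, G_right hQ ha h2]

lemma Fdiff_eq {u : ℝ} (hu : u ∈ Icc (-a) a) :
    F e a - F e u = ∫ s in u..a, H e s := by
  have h1 : IntervalIntegrable (H e) volume 0 a :=
    intH hQ ha ⟨by linarith, by linarith⟩ ⟨by linarith, le_refl a⟩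
  have h2 : IntervalIntegrable (H e) volume 0 u :=
    intH hQ ha ⟨by linarith, by linarith⟩ hu
  exact intervalIntegral.integral_interval_sub_left h1 h2

lemma LB {u : ℝ} (hu : u ∈ Icc 0 a) :
    (Real.sqrt (gg a a))⁻¹ * (2 * Real.sqrt (a - u)) ≤ F e a - F e u := by
  have hu' : u ∈ Icc (-a) a := ⟨by linarith [hu.1], hu.2⟩
  rw [Fdiff_eq hQ ha hu']
  have hcalc : (Real.sqrt (gg a a))⁻¹ * (2 * Real.sqrt (a - u))
      = ∫ s in u..a, (Real.sqrt (gg a a))⁻¹ * (a - s) ^ (-(1/2) : ℝ) := by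
    rw [intervalIntegral.integral_const_mul, sqrt_integral hu.2]
  rw [hcalc]
  have hpt : ∀ s ∈ Icc u a,
      (Real.sqrt (gg a a))⁻¹ * (a - s) ^ (-(1/2) : ℝ) ≤ H e s := by
    intro s hs
    rcases eq_or_lt_of_le hs.2 with h | h
    · have hz : (a - s) ^ (-(1/2):ℝ) = 0 := by
        rw [h, sub_self, Real.zero_rpow (by norm_num : (-(1/2):ℝ) ≠ 0)]
      rw [hz, mul_zero]
      exact Hnonneg s
    · have hs0 : (0:ℝ) ≤ s := le_trans hu.1 hs.1
      have hQle : Q e s ≤ (a - s) * gg a a := by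
        rw [Qfact hQ]
        have := gg_le ha (by linarith : -a ≤ s) h.le
        nlinarith
      have hQp : 0 < Q e s := Qpos hQ ha (by linarith) h
      have hM : (0:ℝ) < gg a a := gg_pos ha (by linarith)
      have hrw : (Real.sqrt (gg a a))⁻¹ * (a - s) ^ (-(1/2) : ℝ)
          = (Real.sqrt ((a - s) * gg a a))⁻¹ := by
        rw [rpow_neg_half (by linarith : (0:ℝ) ≤ a - s), ← mul_inv,
          Real.sqrt_mul (by linarith : (0:ℝ) ≤ a - s), mul_comm]
      rw [hrw]
      show _ ≤ (Real.sqrt (Q e s))⁻¹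
      apply inv_anti₀ (Real.sqrt_pos.2 hQp)
      exact Real.sqrt_le_sqrt hQle
  exact intervalIntegral.integral_mono_on hu.2 (intD _ _)
    (intH hQ ha hu' ⟨by linarith, le_refl a⟩) hpt

lemma UB {u : ℝ} (hu : u ∈ Icc 0 a) :
    F e a - F e u ≤ (Real.sqrt (gg a u))⁻¹ * (2 * Real.sqrt (a - u)) := by
  have hu' : u ∈ Icc (-a) a := ⟨by linarith [hu.1], hu.2⟩
  have hggu : 0 < gg a u := gg_pos ha (by linarith [hu.1])
  rw [Fdiff_eq hQ ha hu']
  have hcalc : (Real.sqrt (gg a u))⁻¹ * (2 * Real.sqrt (a - u))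
      = ∫ s in u..a, (Real.sqrt (gg a u))⁻¹ * (a - s) ^ (-(1/2) : ℝ) := by
    rw [intervalIntegral.integral_const_mul, sqrt_integral hu.2]
  rw [hcalc]
  have hpt : ∀ s ∈ Icc u a,
      H e s ≤ (Real.sqrt (gg a u))⁻¹ * (a - s) ^ (-(1/2) : ℝ) := by
    intro s hs
    rcases eq_or_lt_of_le hs.2 with h | h
    · have hz : (a - s) ^ (-(1/2):ℝ) = 0 := by
        rw [h, sub_self, Real.zero_rpow (by norm_num : (-(1/2):ℝ) ≠ 0)]
      rw [hz, mul_zero, h, Ha_zero hQ ha]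
    · have hs0 : (0:ℝ) ≤ s := le_trans hu.1 hs.1
      have hQge : (a - s) * gg a u ≤ Q e s := by
        rw [Qfact hQ]
        have := gg_mono ha.le hu.1 hs.1
        nlinarith
      have hp : 0 < (a - s) * gg a u := mul_pos (by linarith) hggu
      have hrw : (Real.sqrt (gg a u))⁻¹ * (a - s) ^ (-(1/2) : ℝ)
          = (Real.sqrt ((a - s) * gg a u))⁻¹ := by
        rw [rpow_neg_half (by linarith : (0:ℝ) ≤ a - s), ← mul_inv,
          Real.sqrt_mul (by linarith : (0:ℝ) ≤ a - s), mul_comm]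
      rw [hrw]
      show (Real.sqrt (Q e s))⁻¹ ≤ _
      exact inv_anti₀ (Real.sqrt_pos.2 hp) (Real.sqrt_le_sqrt hQge)
  exact intervalIntegral.integral_mono_on hu.2
    (intH hQ ha hu' ⟨by linarith, le_refl a⟩) (intD _ _) hpt

lemma amp_bound {t : ℝ} (ht : t ∈ Icc 0 (F e a)) :
    a - G e a t ≤ gg a a * (F e a - t) ^ 2 / 4 := by
  have hFa := Fa_pos hQ ha
  have ht' : t ∈ Icc (-(F e a)) (F e a) := ⟨by linarith [ht.1], ht.2⟩
  set u := G e a t with hu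
  have hu0 : 0 ≤ u := by
    rcases eq_or_lt_of_le ht.1 with h | h
    · rw [hu, ← h, G0 hQ ha]
    · have := (Glt hQ ha (⟨by linarith, by linarith⟩ : (0:ℝ) ∈ Icc (-(F e a)) (F e a)) ht').2 h
      rw [G0 hQ ha] at this; linarith
  have humem : u ∈ Icc 0 a := ⟨hu0, (G_mem hQ ha ht').2⟩
  have hlb := LB hQ ha humem
  rw [G_right hQ ha ht'] at hlb
  have hM : 0 < gg a a := gg_pos ha (by linarith)
  have hsM : 0 < Real.sqrt (gg a a) := Real.sqrt_pos.2 hM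
  have h1 : 2 * Real.sqrt (a - u) ≤ Real.sqrt (gg a a) * (F e a - t) := by
    rw [inv_mul_le_iff₀ hsM] at hlb; linarith [hlb]
  nlinarith [Real.sq_sqrt (by linarith [humem.2] : (0:ℝ) ≤ a - u),
    Real.sq_sqrt hM.le, Real.sqrt_nonneg (a - u), Real.sqrt_nonneg (gg a a),
    sq_nonneg (Real.sqrt (gg a a) * (F e a - t) - 2 * Real.sqrt (a - u))]

/-- fold of τ into the fundamental interval [-T, 3T), T = F e a -/
def mm (e a τ : ℝ) : ℝ := τ - (4 * F e a) * ⌊(τ + F e a) / (4 * F e a)⌋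

/-- the triangle wave with period 4T, equal to identity on [-T, T] -/
def wv (e a τ : ℝ) : ℝ := F e a - |mm e a τ - F e a|

/-- the candidate solution -/
def xx (e a τ : ℝ) : ℝ := G e a (wv e a τ)

lemma mm_mem (τ : ℝ) : mm e a τ ∈ Ico (-(F e a)) (3 * F e a) := by
  have hT := Fa_pos hQ ha
  set T := F e a
  set y := (τ + T) / (4 * T) with hy
  have h4 : (0:ℝ) < 4 * T := by linarith
  have h1 : (⌊y⌋ : ℝ) ≤ y := Int.floor_le y
  have h2 : y < ⌊y⌋ + 1 := Int.lt_floor_add_one y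
  have hyy : y * (4 * T) = τ + T := div_mul_cancel₀ _ h4.ne'
  constructor
  · show -T ≤ τ - 4 * T * ⌊y⌋
    nlinarith [mul_le_mul_of_nonneg_right h1 h4.le]
  · show τ - 4 * T * ⌊y⌋ < 3 * T
    nlinarith [mul_lt_mul_of_pos_right h2 h4]

lemma mm_unique {τ : ℝ} (k : ℤ) (h : τ - 4 * F e a * k ∈ Ico (-(F e a)) (3 * F e a)) :
    mm e a τ = τ - 4 * F e a * k := by
  have hT := Fa_pos hQ ha
  set T := F e a
  have h4 : (0:ℝ) < 4 * T := by linarith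
  have hfl : ⌊(τ + T) / (4 * T)⌋ = k := by
    rw [Int.floor_eq_iff]
    rw [div_lt_iff₀ h4, le_div_iff₀ h4]
    constructor
    · nlinarith [h.1]
    · push_cast
      nlinarith [h.2]
  show τ - 4 * T * ⌊(τ + T) / (4 * T)⌋ = τ - 4 * T * k
  rw [hfl]

omit hQ ha in
lemma mm_def (τ : ℝ) : ∃ k : ℤ, mm e a τ = τ - 4 * F e a * k :=
  ⟨⌊(τ + F e a) / (4 * F e a)⌋, rfl⟩

lemma mm_period (τ : ℝ) : mm e a (τ + 4 * F e a) = mm e a τ := by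
  obtain ⟨k, hk⟩ := mm_def (e := e) (a := a) τ
  have h : τ + 4 * F e a - 4 * F e a * ((k + 1 : ℤ) : ℝ) = mm e a τ := by push_cast; rw [hk]; ring
  rw [mm_unique hQ ha (k + 1) (h ▸ mm_mem hQ ha τ), h]

lemma wv_mem (τ : ℝ) : wv e a τ ∈ Icc (-(F e a)) (F e a) := by
  have hT := Fa_pos hQ ha
  have h := mm_mem hQ ha (e := e) (a := a) τ
  simp only [wv, mem_Icc]
  rw [abs_sub_comm]
  constructor
  · have : |F e a - mm e a τ| ≤ 2 * F e a := by
      rw [abs_le]; constructor <;> [nlinarith [h.2]; nlinarith [h.1]]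
    linarith
  · have := abs_nonneg (F e a - mm e a τ); linarith

lemma wv_eq1 {τ : ℝ} (h : mm e a τ ≤ F e a) : wv e a τ = mm e a τ := by
  have h2 := (mm_mem hQ ha (e := e) (a := a) τ).1
  simp only [wv]
  rw [abs_of_nonpos (by linarith)]
  ring

lemma wv_eq2 {τ : ℝ} (h : F e a ≤ mm e a τ) : wv e a τ = 2 * F e a - mm e a τ := by
  simp only [wv]
  rw [abs_of_nonneg (by linarith)]
  ring

lemma mm_self {τ : ℝ} (h : τ ∈ Ico (-(F e a)) (3 * F e a)) : mm e a τ = τ := by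
  have := mm_unique hQ ha (τ := τ) 0 (by push_cast; simpa using h)
  simpa using this

lemma wv_at {τ : ℝ} (h : τ ∈ Icc (-(F e a)) (F e a)) : wv e a τ = τ := by
  have hT := Fa_pos hQ ha
  rw [wv_eq1 hQ ha (by rw [mm_self hQ ha ⟨h.1, by linarith [h.2]⟩]; exact h.2),
    mm_self hQ ha ⟨h.1, by linarith [h.2]⟩]

lemma wv_at2 {τ : ℝ} (h : τ ∈ Ico (F e a) (3 * F e a)) : wv e a τ = 2 * F e a - τ := by
  have hT := Fa_pos hQ ha
  rw [wv_eq2 hQ ha (by rw [mm_self hQ ha ⟨by linarith [h.1], h.2⟩]; exact h.1),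
    mm_self hQ ha ⟨by linarith [h.1], h.2⟩]

lemma wv_anti (τ : ℝ) : wv e a (τ + 2 * F e a) = - wv e a τ := by
  have hT := Fa_pos hQ ha
  obtain ⟨k, hk⟩ := mm_def (e := e) (a := a) τ
  have hm := mm_mem hQ ha (e := e) (a := a) τ
  rcases lt_or_ge (mm e a τ) (F e a) with h | h
  · have h2 : τ + 2 * F e a - 4 * F e a * k = mm e a τ + 2 * F e a := by rw [hk]; ring
    have hmem : mm e a τ + 2 * F e a ∈ Ico (-(F e a)) (3 * F e a) := by
      constructor <;> [linarith [hm.1]; linarith]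
    have := mm_unique hQ ha (τ := τ + 2 * F e a) k (by rw [h2]; exact hmem)
    rw [wv_eq2 hQ ha (by rw [this, h2]; linarith [hm.1]), this, h2,
      wv_eq1 hQ ha h.le]
    ring
  · have h2 : τ + 2 * F e a - 4 * F e a * (k + 1) = mm e a τ - 2 * F e a := by
      push_cast; rw [hk]; ring
    have hmem : mm e a τ - 2 * F e a ∈ Ico (-(F e a)) (3 * F e a) := by
      constructor <;> [linarith [hm.2]; linarith [hm.2]]
    have h3 := mm_unique hQ ha (τ := τ + 2 * F e a) (k + 1) (by push_cast; rw [h2]; exact hmem)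
    push_cast at h3
    rw [wv_eq1 hQ ha (by rw [h3, h2]; linarith [hm.2]), h3, h2,
      wv_eq2 hQ ha h]
    ring

lemma xx_mem (τ : ℝ) : xx e a τ ∈ Icc (-a) a :=
  G_mem hQ ha (wv_mem hQ ha τ)

lemma xx_period : Function.Periodic (xx e a) (4 * F e a) := fun τ => by
  simp only [xx, wv, mm_period hQ ha τ]

lemma xx_anti (τ : ℝ) : xx e a (τ + 2 * F e a) = - xx e a τ := by
  simp only [xx]
  rw [wv_anti hQ ha, Godd hQ ha (wv_mem hQ ha τ)]

lemma xx0 : xx e a 0 = 0 := by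
  have hT := Fa_pos hQ ha
  simp only [xx]
  rw [wv_at hQ ha ⟨by linarith, by linarith⟩, G0 hQ ha]

lemma xxT : xx e a (F e a) = a := by
  have hT := Fa_pos hQ ha
  simp only [xx]
  rw [wv_at hQ ha ⟨by linarith, le_refl _⟩, Ga hQ ha]

lemma xx_eqOn1 {σ : ℝ} (hσ : σ ∈ Icc (-(F e a)) (F e a)) : xx e a σ = G e a σ := by
  simp only [xx]; rw [wv_at hQ ha hσ]

lemma xx_eqOn2 {σ : ℝ} (hσ : σ ∈ Ico (F e a) (3 * F e a)) :
    xx e a σ = G e a (2 * F e a - σ) := by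
  simp only [xx]; rw [wv_at2 hQ ha hσ]

lemma G_interior {t : ℝ} (ht : t ∈ Ioo (-(F e a)) (F e a)) :
    G e a t ∈ Ioo (-a) a := by
  have hT := Fa_pos hQ ha
  have htIcc : t ∈ Icc (-(F e a)) (F e a) := ⟨ht.1.le, ht.2.le⟩
  have hma : -(F e a) ∈ Icc (-(F e a)) (F e a) := ⟨le_refl _, by linarith⟩
  have hpa : F e a ∈ Icc (-(F e a)) (F e a) := ⟨by linarith, le_refl _⟩
  have h1 : G e a (-(F e a)) = -a := by
    have : F e (-a) = -(F e a) := Fodd a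
    rw [← this, G_left hQ ha ⟨le_refl _, by linarith⟩]
  have h2 : G e a (F e a) = a := Ga hQ ha
  constructor
  · have := (Glt hQ ha hma htIcc).2 ht.1
    rwa [h1] at this
  · have := (Glt hQ ha htIcc hpa).2 ht.2
    rwa [h2] at this

lemma Gcont {t : ℝ} (ht : t ∈ Ioo (-(F e a)) (F e a)) : ContinuousAt (G e a) t := by
  have hT := Fa_pos hQ ha
  rw [Metric.continuousAt_iff]
  intro ε hε
  have htIcc : t ∈ Icc (-(F e a)) (F e a) := ⟨ht.1.le, ht.2.le⟩
  set u := G e a t with hudef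
  have hu : u ∈ Icc (-a) a := G_mem hQ ha htIcc
  have hFu : F e u = t := G_right hQ ha htIcc
  have huo : u ∈ Ioo (-a) a := G_interior hQ ha ht
  set ε2 := min (ε/2) (min ((a - u)/2) ((u + a)/2)) with hε2
  have hε2pos : 0 < ε2 := by
    apply lt_min (by linarith)
    apply lt_min
    · have := huo.2; linarith
    · have := huo.1; linarith
  have hε2a : ε2 ≤ (a - u)/2 := le_trans (min_le_right _ _) (min_le_left _ _)
  have hε2b : ε2 ≤ (u + a)/2 := le_trans (min_le_right _ _) (min_le_right _ _)
  have hmem1 : u - ε2 ∈ Icc (-a) a := ⟨by linarith, by linarith [hu.2]⟩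
  have hmem2 : u + ε2 ∈ Icc (-a) a := ⟨by linarith [hu.1], by linarith⟩
  have huIcc : u ∈ Icc (-a) a := hu
  have hlt1 : F e (u - ε2) < t := by
    have := Fmono hQ ha hmem1 huIcc (by linarith)
    rwa [hFu] at this
  have hlt2 : t < F e (u + ε2) := by
    have := Fmono hQ ha huIcc hmem2 (by linarith)
    rwa [hFu] at this
  refine ⟨min (t - F e (u - ε2)) (F e (u + ε2) - t), lt_min (by linarith) (by linarith), ?_⟩
  intro y hy
  rw [Real.dist_eq] at hy ⊢
  have hy1 : F e (u - ε2) < y := by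
    have h := abs_lt.1 hy
    have := min_le_left (t - F e (u - ε2)) (F e (u + ε2) - t)
    linarith [h.1]
  have hy2 : y < F e (u + ε2) := by
    have h := abs_lt.1 hy
    have := min_le_right (t - F e (u - ε2)) (F e (u + ε2) - t)
    linarith [h.2]
  have hymem : y ∈ Icc (-(F e a)) (F e a) := by
    constructor
    · have hlow : -(F e a) ≤ F e (u - ε2) := by
        have : F e (-a) ≤ F e (u - ε2) :=
          (Fmono hQ ha).monotoneOn ⟨le_refl _, by linarith⟩ hmem1 (by linarith [hmem1.1])
        rw [Fodd a] at this
        exact this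
      linarith
    · have hhigh : F e (u + ε2) ≤ F e a := by
        exact (Fmono hQ ha).monotoneOn hmem2 ⟨by linarith, le_refl a⟩ hmem2.2
      linarith
  have hz : F e (G e a y) = y := G_right hQ ha hymem
  have hzmem : G e a y ∈ Icc (-a) a := G_mem hQ ha hymem
  have hc1 : u - ε2 < G e a y := by
    have := (Fmono hQ ha).lt_iff_lt hmem1 hzmem
    rw [hz] at this
    exact this.1 hy1
  have hc2 : G e a y < u + ε2 := by
    have := (Fmono hQ ha).lt_iff_lt hzmem hmem2
    rw [hz] at this
    exact this.1 hy2
  rw [abs_lt]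
  constructor <;> [linarith [min_le_left (ε/2) (min ((a - u)/2) ((u + a)/2))];
    linarith [min_le_left (ε/2) (min ((a - u)/2) ((u + a)/2))]]

lemma GhasDeriv {t : ℝ} (ht : t ∈ Ioo (-(F e a)) (F e a)) :
    HasDerivAt (G e a) (Real.sqrt (Q e (G e a t))) t := by
  have huo : G e a t ∈ Ioo (-a) a := G_interior hQ ha ht
  have hF := FhasDeriv hQ ha huo
  have hQp : 0 < Q e (G e a t) := Qpos hQ ha huo.1 huo.2
  have hne : H e (G e a t) ≠ 0 := by
    simp only [H]
    exact inv_ne_zero (Real.sqrt_pos.2 hQp).ne'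
  have hev : ∀ᶠ y in 𝓝 t, F e (G e a y) = y := by
    filter_upwards [Ioo_mem_nhds ht.1 ht.2] with y hy
    exact G_right hQ ha ⟨hy.1.le, hy.2.le⟩
  have := HasDerivAt.of_local_left_inverse (Gcont hQ ha ht) hF hne hev
  simpa only [H, inv_inv] using this

lemma xx_deriv1 {τ : ℝ} (hτ : τ ∈ Ioo (-(F e a)) (F e a)) :
    HasDerivAt (xx e a) (Real.sqrt (Q e (xx e a τ))) τ := by
  have h := GhasDeriv hQ ha hτ
  have hev : xx e a =ᶠ[𝓝 τ] G e a := by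
    filter_upwards [Ioo_mem_nhds hτ.1 hτ.2] with σ hσ
    exact xx_eqOn1 hQ ha ⟨hσ.1.le, hσ.2.le⟩
  have hx : xx e a τ = G e a τ := xx_eqOn1 hQ ha ⟨hτ.1.le, hτ.2.le⟩
  rw [hx]
  exact h.congr_of_eventuallyEq hev

lemma xx_deriv2 {τ : ℝ} (hτ : τ ∈ Ioo (F e a) (3 * F e a)) :
    HasDerivAt (xx e a) (-Real.sqrt (Q e (xx e a τ))) τ := by
  have hT := Fa_pos hQ ha
  have hτ' : 2 * F e a - τ ∈ Ioo (-(F e a)) (F e a) := by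
    constructor <;> [linarith [hτ.2]; linarith [hτ.1]]
  have hG := GhasDeriv hQ ha hτ'
  have hinner : HasDerivAt (fun σ : ℝ => 2 * F e a - σ) (-1) τ := by
    simpa using (hasDerivAt_id τ).const_sub (2 * F e a)
  have hcomp := hG.comp τ hinner
  have hev : xx e a =ᶠ[𝓝 τ] (fun σ => G e a (2 * F e a - σ)) := by
    filter_upwards [Ioo_mem_nhds hτ.1 hτ.2] with σ hσ
    exact xx_eqOn2 hQ ha ⟨hσ.1.le, hσ.2⟩
  have hx : xx e a τ = G e a (2 * F e a - τ) := xx_eqOn2 hQ ha ⟨hτ.1.le, hτ.2⟩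
  have := hcomp.congr_of_eventuallyEq hev
  rw [hx]
  exact this.congr_deriv (by ring)

lemma xx_quad {σ : ℝ} (hσ : σ ∈ Ioo 0 (2 * F e a)) :
    a - xx e a σ ≤ gg a a * (σ - F e a) ^ 2 / 4 := by
  have hT := Fa_pos hQ ha
  have hm : mm e a σ = σ := mm_self hQ ha ⟨by linarith [hσ.1], by linarith [hσ.2]⟩
  have hw : wv e a σ = F e a - |σ - F e a| := by rw [wv, hm]
  have habs : |σ - F e a| < F e a := by
    rw [abs_lt]
    have h1 := hσ.1; have h2 := hσ.2
    constructor <;> linarith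
  have hwmem : wv e a σ ∈ Icc 0 (F e a) := by
    rw [hw]
    constructor
    · linarith
    · linarith [abs_nonneg (σ - F e a)]
  have := amp_bound hQ ha hwmem
  rw [xx]
  calc a - G e a (wv e a σ) ≤ gg a a * (F e a - wv e a σ) ^ 2 / 4 := this
    _ = gg a a * (σ - F e a) ^ 2 / 4 := by
        rw [hw]
        rw [show F e a - (F e a - |σ - F e a|) = |σ - F e a| by ring, sq_abs]

lemma xx_derivT : HasDerivAt (xx e a) 0 (F e a) := by
  have hT := Fa_pos hQ ha
  have hM : 0 < gg a a := gg_pos ha (by linarith)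
  rw [hasDerivAt_iff_tendsto_slope]
  apply squeeze_zero_norm' (a := fun σ => gg a a / 4 * |σ - F e a|)
  · filter_upwards [mem_nhdsWithin_of_mem_nhds (Ioo_mem_nhds (by linarith : (0:ℝ) < F e a)
      (by linarith : F e a < 2 * F e a)), self_mem_nhdsWithin] with σ hσ hne
    have hne' : σ - F e a ≠ 0 := sub_ne_zero.2 hne
    have hq := xx_quad hQ ha hσ
    have hle : xx e a σ ≤ a := (xx_mem hQ ha σ).2
    have : slope (xx e a) (F e a) σ = (xx e a σ - a) / (σ - F e a) := by
      rw [slope_def_field, xxT hQ ha]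
    rw [this, norm_div, Real.norm_eq_abs, Real.norm_eq_abs,
      abs_of_nonpos (by linarith : xx e a σ - a ≤ 0)]
    rw [div_le_iff₀ (abs_pos.2 hne')]
    calc -(xx e a σ - a) = a - xx e a σ := by ring
      _ ≤ gg a a * (σ - F e a) ^ 2 / 4 := hq
      _ = gg a a / 4 * |σ - F e a| * |σ - F e a| := by
          rw [mul_assoc, ← sq_abs]; ring
  · have hcont : Continuous (fun σ : ℝ => gg a a / 4 * |σ - F e a|) := by
      continuity
    have := hcont.tendsto (F e a)
    simp only [sub_self, abs_zero, mul_zero] at this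
    exact this.mono_left nhdsWithin_le_nhds

omit hQ ha in
lemma Qpoly_hasDeriv (u : ℝ) : HasDerivAt (Q e) (-2*u - 4*u^3) u := by
  have h1 : HasDerivAt (fun s : ℝ => e ^ 2 - s ^ 2 - s ^ 4)
      (0 - 2 * u ^ 1 - 4 * u ^ 3) u := by
    exact ((hasDerivAt_const u (e ^ 2)).sub (hasDerivAt_pow 2 u)).sub
      (by simpa using hasDerivAt_pow 4 u)
  exact h1.congr_deriv (by ring)

omit hQ ha in
lemma sqrtQ_hasDeriv {u : ℝ} (hu : 0 < Q e u) :
    HasDerivAt (fun s => Real.sqrt (Q e s)) ((-2*u - 4*u^3) / (2 * Real.sqrt (Q e u))) u := by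
  have h := (Real.hasDerivAt_sqrt hu.ne').comp u (Qpoly_hasDeriv (e := e) u)
  exact h.congr_deriv (by ring)

lemma xx_dderiv1 {τ : ℝ} (hτ : τ ∈ Ioo (-(F e a)) (F e a)) :
    HasDerivAt (deriv (xx e a)) (-(xx e a τ) - 2 * (xx e a τ) ^ 3) τ := by
  have hev : deriv (xx e a) =ᶠ[𝓝 τ] (fun σ => Real.sqrt (Q e (G e a σ))) := by
    filter_upwards [Ioo_mem_nhds hτ.1 hτ.2] with σ hσ
    rw [(xx_deriv1 hQ ha hσ).deriv, xx_eqOn1 hQ ha ⟨hσ.1.le, hσ.2.le⟩]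
  have hu := G_interior hQ ha hτ
  have hQp := Qpos hQ ha hu.1 hu.2
  have hφ := (sqrtQ_hasDeriv hQp).comp τ (GhasDeriv hQ ha hτ)
  have hsq : Real.sqrt (Q e (G e a τ)) ≠ 0 := (Real.sqrt_pos.2 hQp).ne'
  have hval : (-2 * G e a τ - 4 * G e a τ ^ 3) / (2 * Real.sqrt (Q e (G e a τ)))
      * Real.sqrt (Q e (G e a τ)) = -(G e a τ) - 2 * (G e a τ) ^ 3 := by
    field_simp
    ring
  rw [hval] at hφ
  have hx : xx e a τ = G e a τ := xx_eqOn1 hQ ha ⟨hτ.1.le, hτ.2.le⟩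
  rw [hx]
  exact hφ.congr_of_eventuallyEq hev

lemma xx_dderiv2 {τ : ℝ} (hτ : τ ∈ Ioo (F e a) (3 * F e a)) :
    HasDerivAt (deriv (xx e a)) (-(xx e a τ) - 2 * (xx e a τ) ^ 3) τ := by
  have hT := Fa_pos hQ ha
  have hτ' : 2 * F e a - τ ∈ Ioo (-(F e a)) (F e a) := by
    constructor <;> [linarith [hτ.2]; linarith [hτ.1]]
  have hev : deriv (xx e a) =ᶠ[𝓝 τ]
      (fun σ => -Real.sqrt (Q e (G e a (2 * F e a - σ)))) := by
    filter_upwards [Ioo_mem_nhds hτ.1 hτ.2] with σ hσ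
    rw [(xx_deriv2 hQ ha hσ).deriv, xx_eqOn2 hQ ha ⟨hσ.1.le, hσ.2⟩]
  have hu := G_interior hQ ha hτ'
  have hQp := Qpos hQ ha hu.1 hu.2
  have hinner : HasDerivAt (fun σ : ℝ => 2 * F e a - σ) (-1) τ := by
    simpa using (hasDerivAt_id τ).const_sub (2 * F e a)
  have hGcomp := (GhasDeriv hQ ha hτ').comp τ hinner
  have hφ := ((sqrtQ_hasDeriv hQp).comp τ hGcomp).neg
  have hsq : Real.sqrt (Q e (G e a (2 * F e a - τ))) ≠ 0 := (Real.sqrt_pos.2 hQp).ne'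
  set u := G e a (2 * F e a - τ)
  have hval : -((-2 * u - 4 * u ^ 3) / (2 * Real.sqrt (Q e u))
      * (Real.sqrt (Q e u) * -1)) = -u - 2 * u ^ 3 := by
    field_simp
    ring
  rw [hval] at hφ
  have hx : xx e a τ = u := xx_eqOn2 hQ ha ⟨hτ.1.le, hτ.2⟩
  rw [hx]
  exact hφ.congr_of_eventuallyEq hev

lemma xx_tendsto_a : Tendsto (xx e a) (𝓝[≠] (F e a)) (𝓝 a) := by
  have hT := Fa_pos hQ ha
  have h0 : Tendsto (fun σ => a - xx e a σ) (𝓝[≠] (F e a)) (𝓝 0) := by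
    apply squeeze_zero_norm' (a := fun σ => gg a a / 4 * (σ - F e a) ^ 2)
    · filter_upwards [mem_nhdsWithin_of_mem_nhds (Ioo_mem_nhds
        (by linarith : (0:ℝ) < F e a) (by linarith : F e a < 2 * F e a))] with σ hσ
      rw [Real.norm_eq_abs, abs_of_nonneg (by linarith [(xx_mem hQ ha σ).2])]
      have := xx_quad hQ ha hσ
      linarith
    · have hcont : Continuous (fun σ : ℝ => gg a a / 4 * (σ - F e a) ^ 2) := by
        continuity
      have := hcont.tendsto (F e a)
      simp only [sub_self] at this
      norm_num at this
      exact this.mono_left nhdsWithin_le_nhds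
  have h1 : Tendsto (fun σ => a - (a - xx e a σ)) (𝓝[≠] (F e a)) (𝓝 (a - 0)) :=
    tendsto_const_nhds.sub h0
  simp only [sub_sub_cancel, sub_zero] at h1
  exact h1

lemma xx_dderivT : HasDerivAt (deriv (xx e a)) (-a - 2 * a ^ 3) (F e a) := by
  have hT := Fa_pos hQ ha
  have hM : 0 < gg a a := gg_pos ha (by linarith)
  have hd0 : deriv (xx e a) (F e a) = 0 := (xx_derivT hQ ha).deriv
  rw [hasDerivAt_iff_tendsto_slope]
  have hxxa := xx_tendsto_a hQ ha
  have hggc : Continuous (gg a) := by unfold gg; continuity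
  -- limits of the two bounding functions
  have hlim1 : Tendsto (fun σ => -(Real.sqrt (gg a (xx e a σ)) * Real.sqrt (gg a a)) / 2)
      (𝓝[≠] (F e a)) (𝓝 (-a - 2 * a ^ 3)) := by
    have hc : ContinuousAt (fun v : ℝ => -(Real.sqrt (gg a v) * Real.sqrt (gg a a)) / 2) a := by
      apply ContinuousAt.div_const
      apply ContinuousAt.neg
      exact ((Real.continuous_sqrt.comp hggc).continuousAt).mul continuousAt_const
    have := hc.tendsto.comp hxxa
    have hval : -(Real.sqrt (gg a a) * Real.sqrt (gg a a)) / 2 = -a - 2 * a ^ 3 := by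
      rw [Real.mul_self_sqrt hM.le]
      simp only [gg]
      ring
    rwa [hval] at this
  have hlim2 : Tendsto (fun σ => -(gg a (xx e a σ)) / 2)
      (𝓝[≠] (F e a)) (𝓝 (-a - 2 * a ^ 3)) := by
    have hc : ContinuousAt (fun v : ℝ => -(gg a v) / 2) a :=
      (hggc.continuousAt).neg.div_const 2
    have := hc.tendsto.comp hxxa
    have hval : -(gg a a) / 2 = -a - 2 * a ^ 3 := by simp only [gg]; ring
    rwa [hval] at this
  apply tendsto_of_tendsto_of_tendsto_of_le_of_le' hlim1 hlim2
  -- the two eventual bounds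
  all_goals {
    filter_upwards [mem_nhdsWithin_of_mem_nhds (Ioo_mem_nhds
      (by linarith : (0:ℝ) < F e a) (by linarith : F e a < 2 * F e a)),
      self_mem_nhdsWithin] with σ hσ hne
    replace hne : σ ≠ F e a := hne
    -- setup
    have hm : mm e a σ = σ := mm_self hQ ha ⟨by linarith [hσ.1], by linarith [hσ.2]⟩
    have hw : wv e a σ = F e a - |σ - F e a| := by rw [wv, hm]
    have hδpos : 0 < |σ - F e a| := abs_pos.2 (sub_ne_zero.2 hne)
    have habs : |σ - F e a| < F e a := by
      rw [abs_lt]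
      have h1 := hσ.1; have h2 := hσ.2
      constructor <;> linarith
    have htmem : wv e a σ ∈ Icc (-(F e a)) (F e a) := wv_mem hQ ha σ
    have ht0 : 0 < wv e a σ := by rw [hw]; linarith
    have htT : wv e a σ < F e a := by rw [hw]; linarith
    have hu : xx e a σ = G e a (wv e a σ) := rfl
    have h0mem : (0:ℝ) ∈ Icc (-(F e a)) (F e a) := ⟨by linarith, by linarith⟩
    have hu0 : 0 < xx e a σ := by
      rw [hu]
      have := (Glt hQ ha h0mem htmem).2 ht0
      rwa [G0 hQ ha] at this
    have hua : xx e a σ < a := by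
      rw [hu]
      have := (Glt hQ ha htmem ⟨by linarith, le_refl _⟩).2 htT
      rwa [Ga hQ ha] at this
    have humem : xx e a σ ∈ Icc 0 a := ⟨hu0.le, hua.le⟩
    have hFu : F e (xx e a σ) = wv e a σ := by rw [hu]; exact G_right hQ ha htmem
    have hδeq : F e a - F e (xx e a σ) = |σ - F e a| := by rw [hFu, hw]; ring
    have hlb := LB hQ ha humem
    have hub := UB hQ ha humem
    rw [hδeq] at hlb hub
    set u := xx e a σ
    set δ := |σ - F e a|
    set p := Real.sqrt (a - u) with hp
    set q := Real.sqrt (gg a u) with hq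
    set m := Real.sqrt (gg a a) with hmm
    have hppos : 0 < p := Real.sqrt_pos.2 (by linarith)
    have hqpos : 0 < q := Real.sqrt_pos.2 (gg_pos ha (by linarith))
    have hmpos : 0 < m := Real.sqrt_pos.2 hM
    have hq2 : q * q = gg a u := Real.mul_self_sqrt (gg_pos ha (by linarith)).le
    have hm2 : m * m = gg a a := Real.mul_self_sqrt hM.le
    have hQu : Q e u = (a - u) * gg a u := Qfact hQ u
    have hsQ : Real.sqrt (Q e u) = p * q := by
      rw [hQu, Real.sqrt_mul (by linarith : (0:ℝ) ≤ a - u)]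
    -- slope formula
    have hslope : slope (deriv (xx e a)) (F e a) σ = -(Real.sqrt (Q e u) / δ) := by
      rcases lt_or_gt_of_ne hne with hlt | hgt
      · have hd := (xx_deriv1 hQ ha ⟨by linarith [hσ.1], hlt⟩).deriv
        rw [slope_def_field, hd0, hd, sub_zero]
        have heq : δ = -(σ - F e a) := abs_of_neg (by linarith : σ - F e a < 0)
        rw [heq, div_neg, neg_neg]
      · have hd := (xx_deriv2 hQ ha ⟨hgt, by linarith [hσ.2]⟩).deriv
        rw [slope_def_field, hd0, hd, sub_zero]
        have heq : δ = σ - F e a := abs_of_pos (by linarith : 0 < σ - F e a)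
        rw [heq, neg_div]
    -- bounds on R = √Q/δ
    have hub' : q * δ ≤ 2 * p := by
      have := mul_le_mul_of_nonneg_left hub hqpos.le
      rw [← mul_assoc, mul_inv_cancel₀ hqpos.ne', one_mul] at this
      linarith
    have hlb' : 2 * p ≤ m * δ := by
      have := mul_le_mul_of_nonneg_left hlb hmpos.le
      rw [← mul_assoc, mul_inv_cancel₀ hmpos.ne', one_mul] at this
      linarith
    have hR1 : gg a u / 2 ≤ Real.sqrt (Q e u) / δ := by
      rw [hsQ, le_div_iff₀ hδpos]
      nlinarith [mul_le_mul_of_nonneg_left hub' hqpos.le]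
    have hR2 : Real.sqrt (Q e u) / δ ≤ q * m / 2 := by
      rw [hsQ, div_le_iff₀ hδpos]
      nlinarith [mul_le_mul_of_nonneg_left hlb' hqpos.le]
    rw [hslope]
    first
      | { show -(q * m) / 2 ≤ -(Real.sqrt (Q e u) / δ); linarith }
      | { show -(Real.sqrt (Q e u) / δ) ≤ -(gg a u) / 2; linarith }
  }

/-- the full regularity + ODE package at a point -/
def Pd (e a τ : ℝ) : Prop :=
  HasDerivAt (xx e a) (deriv (xx e a) τ) τ ∧
  HasDerivAt (deriv (xx e a)) (-(xx e a τ) - 2 * (xx e a τ) ^ 3) τ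

lemma P_branch1 {τ : ℝ} (hτ : τ ∈ Ioo (-(F e a)) (F e a)) : Pd e a τ :=
  ⟨by have h := xx_deriv1 hQ ha hτ; rwa [h.deriv], xx_dderiv1 hQ ha hτ⟩

lemma P_branch2 {τ : ℝ} (hτ : τ ∈ Ioo (F e a) (3 * F e a)) : Pd e a τ :=
  ⟨by have h := xx_deriv2 hQ ha hτ; rwa [h.deriv], xx_dderiv2 hQ ha hτ⟩

lemma P_T : Pd e a (F e a) := by
  constructor
  · have h := xx_derivT hQ ha; rwa [h.deriv]
  · rw [xxT hQ ha]
    exact xx_dderivT hQ ha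

lemma P_neg_shift {τ : ℝ} (h : Pd e a (τ + 2 * F e a)) : Pd e a τ := by
  have hfun : xx e a = fun σ => -(xx e a (σ + 2 * F e a)) := by
    funext σ
    rw [xx_anti hQ ha σ, neg_neg]
  have hev : ∀ σ, xx e a σ = -(xx e a (σ + 2 * F e a)) := fun σ => by
    rw [xx_anti hQ ha σ, neg_neg]
  have hxd : HasDerivAt (xx e a) (-(deriv (xx e a) (τ + 2 * F e a))) τ :=
    ((HasDerivAt.comp_add_const τ (2 * F e a) h.1).neg).congr_of_eventuallyEq
      (Eventually.of_forall hev)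
  have hevd : ∀ σ, deriv (xx e a) σ = -(deriv (xx e a) (σ + 2 * F e a)) := fun σ => by
    conv_lhs => rw [hfun]
    rw [deriv.fun_neg, deriv_comp_add_const]
  constructor
  · rwa [hxd.deriv]
  · have built2 : HasDerivAt (deriv (xx e a))
        (-(-(xx e a (τ + 2 * F e a)) - 2 * (xx e a (τ + 2 * F e a)) ^ 3)) τ :=
      ((HasDerivAt.comp_add_const τ (2 * F e a) h.2).neg).congr_of_eventuallyEq
        (Eventually.of_forall hevd)
    convert built2 using 1
    rw [xx_anti hQ ha τ]
    ring

omit hQ ha in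
lemma P_shift {c τ : ℝ} (hper : ∀ σ, xx e a (σ + c) = xx e a σ) (h : Pd e a τ) :
    Pd e a (τ + c) := by
  have hfun : xx e a = fun σ => xx e a (σ - c) := by
    funext σ
    rw [← hper (σ - c), sub_add_cancel]
  have hev : ∀ σ, xx e a σ = xx e a (σ - c) := fun σ => by
    rw [← hper (σ - c), sub_add_cancel]
  have h1 : HasDerivAt (xx e a) (deriv (xx e a) τ) (τ + c - c) := by
    rw [add_sub_cancel_right]; exact h.1
  have built1 : HasDerivAt (xx e a) (deriv (xx e a) τ) (τ + c) :=
    (HasDerivAt.comp_sub_const (τ + c) c h1).congr_of_eventuallyEq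
      (Eventually.of_forall hev)
  have hevd : ∀ σ, deriv (xx e a) σ = deriv (xx e a) (σ - c) := fun σ => by
    conv_lhs => rw [hfun]
    rw [deriv_comp_sub_const]
  constructor
  · rwa [built1.deriv]
  · have h3 : HasDerivAt (deriv (xx e a)) (-(xx e a τ) - 2 * (xx e a τ) ^ 3) (τ + c - c) := by
      rw [add_sub_cancel_right]; exact h.2
    have built2 : HasDerivAt (deriv (xx e a))
        (-(xx e a τ) - 2 * (xx e a τ) ^ 3) (τ + c) :=
      (HasDerivAt.comp_sub_const (τ + c) c h3).congr_of_eventuallyEq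
        (Eventually.of_forall hevd)
    rwa [hper τ]

lemma P_all (τ : ℝ) : Pd e a τ := by
  have hT := Fa_pos hQ ha
  obtain ⟨k, hk⟩ := mm_def (e := e) (a := a) τ
  have hmem := mm_mem hQ ha (e := e) (a := a) τ
  have base : Pd e a (mm e a τ) := by
    rcases eq_or_lt_of_le hmem.1 with h1 | h1
    · -- mm τ = -T : use antiperiodic shift from T
      apply P_neg_shift hQ ha
      rw [← h1, show -(F e a) + 2 * F e a = F e a by ring]
      exact P_T hQ ha
    · rcases lt_trichotomy (mm e a τ) (F e a) with h2 | h2 | h2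
      · exact P_branch1 hQ ha ⟨h1, h2⟩
      · rw [h2]; exact P_T hQ ha
      · exact P_branch2 hQ ha ⟨h2, hmem.2⟩
  have hper : ∀ σ, xx e a (σ + (k : ℝ) * (4 * F e a)) = xx e a σ :=
    (xx_period hQ ha).int_mul k
  have := P_shift hper base
  have hτeq : mm e a τ + (k : ℝ) * (4 * F e a) = τ := by rw [hk]; ring
  rwa [hτeq] at this

lemma xx_diff : Differentiable ℝ (xx e a) := fun τ => (P_all hQ ha τ).1.differentiableAt

lemma xx_deriv_diff : Differentiable ℝ (deriv (xx e a)) :=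
  fun τ => (P_all hQ ha τ).2.differentiableAt

lemma xx_ode (τ : ℝ) :
    deriv (deriv (xx e a)) τ = -(xx e a τ) - 2 * (xx e a τ) ^ 3 :=
  (P_all hQ ha τ).2.deriv

lemma xx_deriv0 (he : 0 < e) : deriv (xx e a) 0 = e := by
  have hT := Fa_pos hQ ha
  have h := xx_deriv1 hQ ha (τ := 0) ⟨by linarith, by linarith⟩
  rw [h.deriv, xx0 hQ ha]
  have : Q e 0 = e ^ 2 := by simp [Q]
  rw [this, Real.sqrt_sq he.le]

lemma xx_derivT0 : deriv (xx e a) (F e a) = 0 := (xx_derivT hQ ha).deriv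

end params

/-- energy conservation for any global solution of the Duffing equation -/
lemma energy_const {y : ℝ → ℝ} (hy : Differentiable ℝ y) (hy' : Differentiable ℝ (deriv y))
    (hode : ∀ τ, deriv (deriv y) τ = -y τ - 2 * y τ ^ 3) (τ : ℝ) :
    deriv y τ ^ 2 + y τ ^ 2 + y τ ^ 4 = deriv y 0 ^ 2 + y 0 ^ 2 + y 0 ^ 4 := by
  set E := fun τ => deriv y τ ^ 2 + y τ ^ 2 + y τ ^ 4 with hE
  have hEd : ∀ t, HasDerivAt E 0 t := by
    intro t
    have hdy : HasDerivAt (deriv y) (deriv (deriv y) t) t := (hy' t).hasDerivAt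
    have hyy : HasDerivAt y (deriv y t) t := (hy t).hasDerivAt
    have h1 := hdy.pow 2
    have h2 := hyy.pow 2
    have h3 := hyy.pow 4
    have hsum := (h1.add h2).add h3
    exact hsum.congr_deriv (by rw [hode t]; ring)
  have hconst : ∀ s t : ℝ, E s = E t := fun s t =>
    is_const_of_deriv_eq_zero (fun u => (hEd u).differentiableAt)
      (fun u => (hEd u).deriv) s t
  exact hconst τ 0

/-- the Duffing vector field on phase space -/
def vf : ℝ × ℝ → ℝ × ℝ := fun z => (z.2, -z.1 - 2 * z.1 ^ 3)

lemma vf_lip {R : ℝ} (hR : 0 ≤ R) :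
    LipschitzOnWith (Real.toNNReal (1 + 6 * R ^ 2)) vf (Metric.closedBall (0 : ℝ × ℝ) R) := by
  rw [lipschitzOnWith_iff_dist_le_mul]
  intro z1 h1 z2 h2
  rw [Metric.mem_closedBall, dist_zero_right] at h1 h2
  have hp1 : |z1.1| ≤ R := le_trans (by rw [← Real.norm_eq_abs]; exact norm_fst_le z1) h1
  have hp2 : |z2.1| ≤ R := le_trans (by rw [← Real.norm_eq_abs]; exact norm_fst_le z2) h2
  have hKpos : (0:ℝ) ≤ 1 + 6 * R ^ 2 := by positivity
  rw [Real.coe_toNNReal _ hKpos]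
  rw [Prod.dist_eq, Prod.dist_eq]
  simp only [vf]
  simp only [Real.dist_eq]
  apply max_le
  · calc |z1.2 - z2.2| ≤ max |z1.1 - z2.1| |z1.2 - z2.2| := le_max_right _ _
      _ ≤ (1 + 6 * R ^ 2) * max |z1.1 - z2.1| |z1.2 - z2.2| := by
          nlinarith [le_max_left |z1.1 - z2.1| |z1.2 - z2.2|,
            le_max_right |z1.1 - z2.1| |z1.2 - z2.2|, abs_nonneg (z1.1 - z2.1),
            abs_nonneg (z1.2 - z2.2), sq_nonneg R,
            max_le_iff.2 ⟨le_max_left |z1.1 - z2.1| |z1.2 - z2.2|,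
              le_max_right |z1.1 - z2.1| |z1.2 - z2.2|⟩]
  · have hfact : -z1.1 - 2 * z1.1 ^ 3 - (-z2.1 - 2 * z2.1 ^ 3)
        = -((z1.1 - z2.1) * (1 + 2 * (z1.1 ^ 2 + z1.1 * z2.1 + z2.1 ^ 2))) := by ring
    have hq : 0 ≤ 1 + 2 * (z1.1 ^ 2 + z1.1 * z2.1 + z2.1 ^ 2) := by
      nlinarith [sq_nonneg (z1.1 + z2.1), sq_nonneg (z1.1 - z2.1)]
    have hqle : 1 + 2 * (z1.1 ^ 2 + z1.1 * z2.1 + z2.1 ^ 2) ≤ 1 + 6 * R ^ 2 := by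
      have h1sq : z1.1 ^ 2 ≤ R ^ 2 := by nlinarith [abs_nonneg z1.1, sq_abs z1.1]
      have h2sq : z2.1 ^ 2 ≤ R ^ 2 := by nlinarith [abs_nonneg z2.1, sq_abs z2.1]
      have hcross : z1.1 * z2.1 ≤ R ^ 2 := by
        calc z1.1 * z2.1 ≤ |z1.1 * z2.1| := le_abs_self _
          _ = |z1.1| * |z2.1| := abs_mul _ _
          _ ≤ R * R := mul_le_mul hp1 hp2 (abs_nonneg _) hR
          _ = R ^ 2 := by ring
      linarith
    calc |-z1.1 - 2 * z1.1 ^ 3 - (-z2.1 - 2 * z2.1 ^ 3)|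
        = |z1.1 - z2.1| * (1 + 2 * (z1.1 ^ 2 + z1.1 * z2.1 + z2.1 ^ 2)) := by
          rw [hfact, abs_neg, abs_mul, abs_of_nonneg hq]
      _ ≤ (1 + 6 * R ^ 2) * |z1.1 - z2.1| := by
          nlinarith [abs_nonneg (z1.1 - z2.1)]
      _ ≤ (1 + 6 * R ^ 2) * max |z1.1 - z2.1| |z1.2 - z2.2| := by
          have := le_max_left |z1.1 - z2.1| |z1.2 - z2.2|
          nlinarith

/-- uniqueness of solutions of the Duffing equation with common energy bound -/
lemma ode_unique {y z : ℝ → ℝ} {Ev : ℝ}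
    (hEpos : 0 < Ev)
    (hy : Differentiable ℝ y) (hy' : Differentiable ℝ (deriv y))
    (hyode : ∀ τ, deriv (deriv y) τ = -y τ - 2 * y τ ^ 3)
    (hz : Differentiable ℝ z) (hz' : Differentiable ℝ (deriv z))
    (hzode : ∀ τ, deriv (deriv z) τ = -z τ - 2 * z τ ^ 3)
    (hyE : ∀ τ, deriv y τ ^ 2 + y τ ^ 2 + y τ ^ 4 = Ev)
    (hzE : ∀ τ, deriv z τ ^ 2 + z τ ^ 2 + z τ ^ 4 = Ev)
    (h0 : y 0 = z 0) (h0' : deriv y 0 = deriv z 0) : y = z := by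
  set R := Real.sqrt Ev with hR
  have hRpos : 0 < R := Real.sqrt_pos.2 hEpos
  have hR2 : R ^ 2 = Ev := Real.sq_sqrt hEpos.le
  have hbd : ∀ (w : ℝ → ℝ), (∀ τ, deriv w τ ^ 2 + w τ ^ 2 + w τ ^ 4 = Ev) →
      ∀ t : ℝ, (w t, deriv w t) ∈ Metric.closedBall (0 : ℝ × ℝ) R := by
    intro w hw t
    rw [Metric.mem_closedBall, dist_zero_right, Prod.norm_def]
    apply max_le
    · rw [Real.norm_eq_abs, abs_le]
      constructor <;> nlinarith [hw t, sq_nonneg (deriv w t), sq_nonneg (w t),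
        sq_nonneg (w t ^ 2), sq_nonneg (w t - R), sq_nonneg (w t + R)]
    · rw [Real.norm_eq_abs, abs_le]
      constructor <;> nlinarith [hw t, sq_nonneg (w t), sq_nonneg (w t ^ 2),
        sq_nonneg (deriv w t - R), sq_nonneg (deriv w t + R)]
  have key : ∀ b : ℝ, 0 < b → Set.EqOn (fun t => (y t, deriv y t))
      (fun t => (z t, deriv z t)) (Icc (-b) b) := by
    intro b hb
    apply ODE_solution_unique_of_mem_Icc
      (v := fun _ p => vf p) (s := fun _ => Metric.closedBall (0 : ℝ × ℝ) R)
      (K := Real.toNNReal (1 + 6 * R ^ 2))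
      (fun _ _ => vf_lip hRpos.le)
      (ht := ⟨neg_lt_zero.2 hb, hb⟩)
    · exact (Continuous.prodMk hy.continuous hy'.continuous).continuousOn
    · intro t _
      have h1 : HasDerivAt y (deriv y t) t := (hy t).hasDerivAt
      have h2 : HasDerivAt (deriv y) (-y t - 2 * y t ^ 3) t := by
        rw [← hyode t]; exact (hy' t).hasDerivAt
      exact h1.prodMk h2
    · exact fun t _ => hbd y hyE t
    · exact (Continuous.prodMk hz.continuous hz'.continuous).continuousOn
    · intro t _
      have h1 : HasDerivAt z (deriv z t) t := (hz t).hasDerivAt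
      have h2 : HasDerivAt (deriv z) (-z t - 2 * z t ^ 3) t := by
        rw [← hzode t]; exact (hz' t).hasDerivAt
      exact h1.prodMk h2
    · exact fun t _ => hbd z hzE t
    · rw [h0, h0']
  funext τ
  have hb : (0:ℝ) < |τ| + 1 := by positivity
  have hmem : τ ∈ Icc (-(|τ| + 1)) (|τ| + 1) := by
    constructor <;> [linarith [neg_abs_le τ]; linarith [le_abs_self τ]]
  have := key (|τ| + 1) hb hmem
  exact congrArg Prod.fst this

end DuffingAux

end


noncomputable section

open Real

/-- The (unique, global) solution of the Duffing initial value problem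
x'' = −x − 2x³, x(0) = 0, x'(0) = e oscillates between ±x₀ (where x₀²(1+x₀²) = e²) and is
periodic with period T = 4∫₀^{x₀}(e² − s² − s⁴)^{−1/2} ds, reaching its amplitude with zero
velocity at T/4. -/
theorem duffing_pulsating_solution (e x₀ : ℝ) (he : 0 < e) (hx₀pos : 0 < x₀)
    (hx₀ : x₀ ^ 2 * (1 + x₀ ^ 2) = e ^ 2) :
    ∃ x : ℝ → ℝ,
      -- x is the (global) solution of the IVP
      Differentiable ℝ x ∧ Differentiable ℝ (deriv x) ∧
      (∀ τ, deriv (deriv x) τ = -x τ - 2 * x τ ^ 3) ∧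
      x 0 = 0 ∧ deriv x 0 = e ∧
      -- uniqueness: any global solution of the IVP coincides with x
      (∀ y : ℝ → ℝ, Differentiable ℝ y → Differentiable ℝ (deriv y) →
        (∀ τ, deriv (deriv y) τ = -y τ - 2 * y τ ^ 3) →
        y 0 = 0 → deriv y 0 = e → y = x) ∧
      -- the amplitude is exactly x₀
      (∀ τ, |x τ| ≤ x₀) ∧ (⨆ τ : ℝ, |x τ|) = x₀ ∧
      -- periodicity with period T, and quarter-period data
      Function.Periodic x
        (4 * ∫ s in (0:ℝ)..x₀, (Real.sqrt (e ^ 2 - s ^ 2 - s ^ 4))⁻¹) ∧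
      x ((4 * ∫ s in (0:ℝ)..x₀, (Real.sqrt (e ^ 2 - s ^ 2 - s ^ 4))⁻¹) / 4) = x₀ ∧
      deriv x ((4 * ∫ s in (0:ℝ)..x₀, (Real.sqrt (e ^ 2 - s ^ 2 - s ^ 4))⁻¹) / 4) = 0 := by
  have hTeq : (∫ s in (0:ℝ)..x₀, (Real.sqrt (e ^ 2 - s ^ 2 - s ^ 4))⁻¹)
      = DuffingAux.F e x₀ := rfl
  have hxdiff := DuffingAux.xx_diff hx₀ hx₀pos
  have hxdiff' := DuffingAux.xx_deriv_diff hx₀ hx₀pos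
  have hxode := DuffingAux.xx_ode hx₀ hx₀pos
  have hx0 := DuffingAux.xx0 hx₀ hx₀pos
  have hxd0 := DuffingAux.xx_deriv0 hx₀ hx₀pos he
  have hbound : ∀ τ, |DuffingAux.xx e x₀ τ| ≤ x₀ := fun τ => by
    have := DuffingAux.xx_mem hx₀ hx₀pos τ
    exact abs_le.2 ⟨this.1, this.2⟩
  refine ⟨DuffingAux.xx e x₀, hxdiff, hxdiff', hxode, hx0, hxd0, ?_, hbound, ?_, ?_, ?_, ?_⟩
  · -- uniqueness
    intro y hy hy' hyode hy0 hy0'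
    have hyE : ∀ τ, deriv y τ ^ 2 + y τ ^ 2 + y τ ^ 4 = e ^ 2 := fun τ => by
      rw [DuffingAux.energy_const hy hy' hyode τ, hy0, hy0']; ring
    have hxE : ∀ τ, deriv (DuffingAux.xx e x₀) τ ^ 2 + DuffingAux.xx e x₀ τ ^ 2
        + DuffingAux.xx e x₀ τ ^ 4 = e ^ 2 := fun τ => by
      rw [DuffingAux.energy_const hxdiff hxdiff' hxode τ, hx0, hxd0]; ring
    exact DuffingAux.ode_unique (by positivity) hy hy' hyode hxdiff hxdiff' hxode
      hyE hxE (by rw [hy0, hx0]) (by rw [hy0', hxd0])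
  · -- supremum
    apply le_antisymm
    · exact ciSup_le hbound
    · have hb : BddAbove (Set.range fun τ => |DuffingAux.xx e x₀ τ|) := by
        refine ⟨x₀, ?_⟩
        rintro _ ⟨τ, rfl⟩
        exact hbound τ
      have hval : |DuffingAux.xx e x₀ (DuffingAux.F e x₀)| = x₀ := by
        rw [DuffingAux.xxT hx₀ hx₀pos, abs_of_nonneg hx₀pos.le]
      calc x₀ = |DuffingAux.xx e x₀ (DuffingAux.F e x₀)| := hval.symm
        _ ≤ ⨆ τ : ℝ, |DuffingAux.xx e x₀ τ| := le_ciSup hb (DuffingAux.F e x₀)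
  · -- periodicity
    rw [hTeq]
    exact DuffingAux.xx_period hx₀ hx₀pos
  · rw [hTeq, show 4 * DuffingAux.F e x₀ / 4 = DuffingAux.F e x₀ by ring]
    exact DuffingAux.xxT hx₀ hx₀pos
  · rw [hTeq, show 4 * DuffingAux.F e x₀ / 4 = DuffingAux.F e x₀ by ring]
    exact DuffingAux.xx_derivT0 hx₀ hx₀pos
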